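/- Let (Ω, F, P) be a probability space, and let C, D, E be sub-σ-algebras with E ⊆ C and E ⊆ D. Suppose that for every f ∈ L²(C) with E[f | E] = 0 and every g ∈ L²(D) with E[g | E] = 0, one has E[fg] = 0 (relative orthogonality over E). Then for every f ∈ L²(P), E[E[f | C] | D] = E[f | E]. -/

import Mathlib

open MeasureTheory

lemma memLp_two_condexp {Ω : Type*} {m : MeasurableSpace Ω} {m0 : MeasurableSpace Ω} (μ : Measure Ω)
    [IsFiniteMeasure μ] (hm : m ≤ m0) {f : Ω → ℝ} (hf : MemLp f 2 μ) :
    MemLp (μ[f|m]) 2 μ := by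
  haveI : SigmaFinite (μ.trim hm) := by
    haveI : IsFiniteMeasure (μ.trim hm) := isFiniteMeasure_trim hm
    infer_instance
  set g : Lp ℝ 2 μ := (condExpL2 ℝ ℝ hm (hf.toLp f) : Lp ℝ 2 μ) with hg
  have hgm : AEStronglyMeasurable[m] (g : Ω → ℝ) μ := aestronglyMeasurable_condExpL2 hm _
  have h : (g : Ω → ℝ) =ᵐ[μ] μ[f|m] := by
    refine ae_eq_condExp_of_forall_setIntegral_eq hm (hf.integrable one_le_two)
      (fun s hs hμs => integrableOn_Lp_of_measure_ne_top g fact_one_le_two_ennreal.elim hμs.ne)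
      (fun s hs hμs => ?_) hgm
    rw [hg, integral_condExpL2_eq hm (hf.toLp f) hs hμs.ne]
    exact setIntegral_congr_ae (hm s hs) ((hf.coeFn_toLp).mono fun x hx _ => hx)
  exact (Lp.memLp g).ae_eq h

/-- let `E ⊆ C` and `E ⊆ D` be sub-σ-algebras of a probability space such
that `L²(C) ⊖ L²(E)` and `L²(D) ⊖ L²(E)` are orthogonal. Then for every `f ∈ L²(P)`,
`E[E[f | C] | D] = E[f | E]`. -/
theorem stmt7 {Ω : Type*} {m0 : MeasurableSpace Ω} (P : Measure Ω) [IsProbabilityMeasure P]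
    (C D E : MeasurableSpace Ω) (hC : C ≤ m0) (hD : D ≤ m0)
    (hEC : E ≤ C) (hED : E ≤ D)
    (horth : ∀ f g : Ω → ℝ, MemLp f 2 P → MemLp g 2 P →
      StronglyMeasurable[C] f → StronglyMeasurable[D] g →
      P[f|E] =ᵐ[P] 0 → P[g|E] =ᵐ[P] 0 → ∫ ω, f ω * g ω ∂P = 0) :
    ∀ f : Ω → ℝ, MemLp f 2 P → P[P[f|C]|D] =ᵐ[P] P[f|E] := by
  intro f hf2
  have hE : E ≤ m0 := hEC.trans hC
  have hfC2 : MemLp (P[f|C]) 2 P := memLp_two_condexp P hC hf2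
  have hfE2 : MemLp (P[f|E]) 2 P := memLp_two_condexp P hE hf2
  set h : Ω → ℝ := P[f|C] - P[f|E] with hh_def
  have hh2 : MemLp h 2 P := hfC2.sub hfE2
  set g : Ω → ℝ := P[h|D] with hg_def
  have hg2 : MemLp g 2 P := memLp_two_condexp P hD hh2
  -- strong measurability
  have hhC : StronglyMeasurable[C] h :=
    stronglyMeasurable_condExp.sub (stronglyMeasurable_condExp.mono hEC)
  have hgD : StronglyMeasurable[D] g := stronglyMeasurable_condExp
  -- P[h|E] = 0
  have hhE : P[h|E] =ᵐ[P] 0 := by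
    have h1 : P[P[f|C]|E] =ᵐ[P] P[f|E] := condExp_condExp_of_le hEC hC
    have h2 : P[P[f|E]|E] =ᵐ[P] P[f|E] := by
      rw [condExp_of_stronglyMeasurable hE stronglyMeasurable_condExp integrable_condExp]
    have h3 : P[h|E] =ᵐ[P] P[P[f|C]|E] - P[P[f|E]|E] :=
      condExp_sub integrable_condExp integrable_condExp E
    filter_upwards [h1, h2, h3] with ω h1 h2 h3
    simp [h3, h1, h2]
  have hgE : P[g|E] =ᵐ[P] 0 := (condExp_condExp_of_le hED hD).trans hhE
  -- orthogonality gives ∫ h g = 0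
  have hzero : ∫ ω, h ω * g ω ∂P = 0 := horth h g hh2 hg2 hhC hgD hhE hgE
  -- ∫ g² = ∫ g h = ∫ h g = 0
  have hgh_int : Integrable (g * h) P := by
    have hm : MemLp (g • h) 1 P :=
      MemLp.smul hh2 hg2
    rw [memLp_one_iff_integrable] at hm
    simpa [smul_eq_mul] using hm
  have hpull : P[g * h|D] =ᵐ[P] g * P[h|D] :=
    condExp_mul_of_stronglyMeasurable_left hgD hgh_int (hh2.integrable one_le_two)
  have hsq : ∫ ω, g ω * g ω ∂P = 0 := by
    have ha : ∫ ω, (P[g * h|D]) ω ∂P = ∫ ω, (g * h) ω ∂P :=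
      integral_condExp (μ := P) (f := g * h) hD
    have hb : ∫ ω, (P[g * h|D]) ω ∂P = ∫ ω, (g * P[h|D]) ω ∂P :=
      integral_congr_ae hpull
    have h1 : ∫ ω, (g * h) ω ∂P = ∫ ω, g ω * g ω ∂P := by
      rw [← ha, hb]; rfl
    have h2 : ∫ ω, (g * h) ω ∂P = ∫ ω, h ω * g ω ∂P := by
      refine integral_congr_ae (Filter.Eventually.of_forall fun ω => ?_)
      simp [mul_comm]
    rw [← h1, h2]
    exact hzero
  -- hence g = 0 a.e.
  have hg0 : g =ᵐ[P] 0 := by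
    have hint : Integrable (fun ω => g ω * g ω) P := by
      have hm : MemLp (g • g) 1 P :=
        MemLp.smul hg2 hg2
      rw [memLp_one_iff_integrable] at hm
      exact (by simpa [smul_eq_mul, Pi.mul_apply] using hm : Integrable (g * g) P)
    have hnn : 0 ≤ᵐ[P] fun ω => g ω * g ω :=
      Filter.Eventually.of_forall fun ω => mul_self_nonneg _
    have := (integral_eq_zero_iff_of_nonneg_ae hnn hint).mp hsq
    filter_upwards [this] with ω hω
    have : g ω * g ω = 0 := hω
    simpa [mul_self_eq_zero] using this
  -- assemble
  have hsplit : P[P[f|C]|D] =ᵐ[P] P[h|D] + P[P[f|E]|D] := by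
    have : P[f|C] = h + P[f|E] := by simp [hh_def]
    rw [this]
    exact condExp_add (hh2.integrable one_le_two) integrable_condExp D
  have hED' : P[P[f|E]|D] =ᵐ[P] P[f|E] := by
    rw [condExp_of_stronglyMeasurable hD (stronglyMeasurable_condExp.mono hED)
      integrable_condExp]
  filter_upwards [hsplit, hED', hg0] with ω h1 h2 h3
  have : g ω = 0 := h3
  simp [h1, h2, ← hg_def]
  simp_all
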